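/- Let G be a finite simple graph on n vertices. Then for every integer k ≥ 1, sdepth(J(G)^(k)) ≥ n − ν_o(G), where ν_o(G) is the ordered matching number of G. -/

import Mathlib

open MvPolynomial

/-- The `k`-th symbolic power of the cover ideal of a graph `G`:
`J(G)^(k) = ⋂_{{x,y} ∈ E(G)} (x,y)^k`. -/
noncomputable def coverIdealSymbPow (K : Type*) [Field K] {V : Type*}
    (G : SimpleGraph V) (k : ℕ) : Ideal (MvPolynomial V K) :=
  ⨅ e : {p : V × V // G.Adj p.1 p.2}, (Ideal.span {X e.val.1, X e.val.2}) ^ k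

/-- `a b : Fin r → V` describe an ordered matching of `G` of size `r`:
the edges `{a i, b i}` are pairwise disjoint edges of `G`, the vertices
`a 0, …, a (r-1)` form an independent set, and `G.Adj (a i) (b j)` implies `i ≤ j`. -/
def IsOrderedMatching {V : Type*} (G : SimpleGraph V) {r : ℕ} (a b : Fin r → V) : Prop :=
  (∀ i, G.Adj (a i) (b i)) ∧
  (∀ i j, i ≠ j → ({a i, b i} : Set V) ∩ ({a j, b j} : Set V) = ∅) ∧
  (∀ i j, ¬ G.Adj (a i) (a j)) ∧
  (∀ i j, G.Adj (a i) (b j) → i ≤ j)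

/-- The ordered matching number of a graph: the maximum size of an ordered matching. -/
noncomputable def orderedMatchingNum {V : Type*} (G : SimpleGraph V) : ℕ :=
  sSup {r : ℕ | ∃ a b : Fin r → V, IsOrderedMatching G a b}

/-- The "Stanley set" of monomials `u·K[Z]`, recorded by exponent vectors:
all exponent vectors of the form `u + w` with `w` supported in `Z`. -/
def stanleyPiece {σ : Type*} (u : σ →₀ ℕ) (Z : Finset σ) : Set (σ →₀ ℕ) :=
  {v | u ≤ v ∧ ∀ i ∉ Z, v i = u i}

/-- A Stanley decomposition of a set of monomials (recorded by their exponent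
vectors): a partition into finitely many Stanley sets `u_i·K[Z_i]`. -/
structure StanleyDecomp {σ : Type*} (A : Set (σ →₀ ℕ)) where
  m : ℕ
  u : Fin m → (σ →₀ ℕ)
  Z : Fin m → Finset σ
  cover : A = ⋃ i, stanleyPiece (u i) (Z i)
  disj : ∀ i j, i ≠ j → Disjoint (stanleyPiece (u i) (Z i)) (stanleyPiece (u j) (Z j))

/-- Stanley depth of a set of monomials: the maximum over all Stanley
decompositions of the minimum `|Z_i|` (with value `⊤` on the empty set,
corresponding to the convention `sdepth 0 = ∞`). -/
noncomputable def sdepthSet {σ : Type*} (A : Set (σ →₀ ℕ)) : ℕ∞ :=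
  ⨆ D : StanleyDecomp A, ⨅ i, ((D.Z i).card : ℕ∞)

/-- The set of (exponent vectors of) monomials belonging to an ideal. -/
def monomialSet {σ K : Type*} [CommSemiring K] (I : Ideal (MvPolynomial σ K)) :
    Set (σ →₀ ℕ) :=
  {v | MvPolynomial.monomial v (1 : K) ∈ I}

/-- Stanley depth of a monomial ideal `I ⊆ S = K[x_1,…,x_n]`. -/
noncomputable def sdepthIdeal {σ K : Type*} [CommSemiring K]
    (I : Ideal (MvPolynomial σ K)) : ℕ∞ :=
  sdepthSet (monomialSet I)

/-- Stanley depth of the quotient `S/I` of the polynomial ring by a monomial ideal. -/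
noncomputable def sdepthQuot {σ K : Type*} [CommSemiring K]
    (I : Ideal (MvPolynomial σ K)) : ℕ∞ :=
  sdepthSet (monomialSet I)ᶜ

namespace SPA

variable {n : ℕ} (G : SimpleGraph (Fin n)) (k : ℕ)

/-- The set of exponent vectors of monomials in the `k`-th symbolic power of the
cover ideal: `k`-covers of `G`. -/
def Apts : Set (Fin n →₀ ℕ) := {v | ∀ p q : Fin n, G.Adj p q → k ≤ v p + v q}

/-- A state of the splitting process: current lower bounds and the list of pins
(with partner and pinned value), newest first. -/
structure St (n : ℕ) where
  ell : Fin n → ℕ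
  M : List (Fin n × Fin n × ℕ)

def St.pins (S : St n) : List (Fin n) := S.M.map (·.1)

/-- The part of the ambient monomial space described by a state: pinned
coordinates are frozen at their values, other coordinates are bounded below. -/
def Region (S : St n) : Set (Fin n →₀ ℕ) :=
  {v | (∀ a ∈ S.pins, v a = S.ell a) ∧ ∀ z, S.ell z ≤ v z}

/-- An edge whose constraint is not yet guaranteed by the state. -/
def Active (S : St n) (p q : Fin n) : Prop :=
  G.Adj p q ∧ p ∉ S.pins ∧ q ∉ S.pins ∧ S.ell p + S.ell q < k

/-- The invariants of the splitting process. -/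
structure Inv (S : St n) : Prop where
  adj : ∀ e ∈ S.M, G.Adj e.1 e.2.1
  pinval : ∀ e ∈ S.M, S.ell e.1 = e.2.2
  small : ∀ e ∈ S.M, 2 * e.2.2 < k
  raised : ∀ e ∈ S.M, ∀ q, G.Adj e.1 q → k ≤ e.2.2 + S.ell q
  minpin : ∀ e ∈ S.M, ∀ p q, Active G k S p q → e.2.2 ≤ S.ell p
  partnerFree : ∀ e ∈ S.M, e.2.1 ∉ S.pins
  pair : S.M.Pairwise fun e f => ¬ G.Adj e.1 f.1 ∧ ¬ G.Adj f.1 e.2.1 ∧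
      e.1 ≠ f.1 ∧ e.1 ≠ f.2.1 ∧ e.2.1 ≠ f.1 ∧ e.2.1 ≠ f.2.1

/-- The pins of an invariant state form an ordered matching. -/
lemma inv_isOrderedMatching (S : St n) (hI : Inv G k S) :
    IsOrderedMatching G (fun i : Fin S.M.length => (S.M.get i).1)
      (fun i : Fin S.M.length => (S.M.get i).2.1) := by
  have hpw := (List.pairwise_iff_get).1 hI.pair
  have hget : ∀ i : Fin S.M.length, S.M.get i ∈ S.M := fun i => S.M.get_mem i
  have hne : ∀ i j : Fin S.M.length, i ≠ j →
      (S.M.get i).1 ≠ (S.M.get j).1 ∧ (S.M.get i).1 ≠ (S.M.get j).2.1 ∧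
      (S.M.get i).2.1 ≠ (S.M.get j).1 ∧ (S.M.get i).2.1 ≠ (S.M.get j).2.1 := by
    intro i j hij
    rcases lt_or_gt_of_ne hij with h | h
    · obtain ⟨-, -, h3, h4, h5, h6⟩ := hpw i j h
      exact ⟨h3, h4, h5, h6⟩
    · obtain ⟨-, -, h3, h4, h5, h6⟩ := hpw j i h
      exact ⟨h3.symm, h5.symm, h4.symm, h6.symm⟩
  refine ⟨fun i => hI.adj _ (hget i), ?_, ?_, ?_⟩
  · intro i j hij
    obtain ⟨h3, h4, h5, h6⟩ := hne i j hij
    ext y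
    simp only [Set.mem_inter_iff, Set.mem_insert_iff, Set.mem_singleton_iff,
      Set.mem_empty_iff_false, iff_false, not_and]
    rintro (rfl | rfl) <;> rintro (h | h) <;> first
      | exact h3 h | exact h4 h | exact h5 h | exact h6 h
  · intro i j
    rcases eq_or_ne i j with rfl | hij
    · exact G.irrefl
    · rcases lt_or_gt_of_ne hij with h | h
      · exact (hpw i j h).1
      · intro hA
        exact (hpw j i h).1 hA.symm
  · intro i j hA
    by_contra hle
    push_neg at hle
    exact (hpw j i hle).2.1 hA

lemma bddAboveOM : BddAbove {r : ℕ | ∃ a b : Fin r → Fin n, IsOrderedMatching G a b} := by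
  refine ⟨n, ?_⟩
  rintro r ⟨a, b, h1, h2, h3, h4⟩
  have hinj : Function.Injective a := by
    intro i j hij
    by_contra hne
    have h5 := h2 i j hne
    have h6 : a i ∈ ({a i, b i} : Set (Fin n)) ∩ {a j, b j} :=
      ⟨Set.mem_insert _ _, by rw [hij]; exact Set.mem_insert _ _⟩
    rw [h5] at h6
    exact h6
  simpa using Fintype.card_le_of_injective a hinj

lemma length_le_nu (S : St n) (hI : Inv G k S) : S.M.length ≤ orderedMatchingNum G :=
  le_csSup (bddAboveOM G) ⟨_, _, inv_isOrderedMatching G k S hI⟩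

/-- Termination measure. -/
def msr (S : St n) : ℕ := ∑ x : Fin n, (k - min (S.ell x) k)

/-- At a leaf (no active edges), the region is contained in the set of `k`-covers. -/
lemma region_subset_apts (S : St n) (hI : Inv G k S)
    (hA : ¬ ∃ p q, Active G k S p q) : Region S ⊆ Apts G k := by
  push_neg at hA
  intro v hv p q hpq
  classical
  by_cases hp : p ∈ S.pins
  · obtain ⟨e, he, rfl⟩ : ∃ e ∈ S.M, e.1 = p := by
      simpa [St.pins] using hp
    have h1 := hI.raised e he q hpq
    have h2 := hI.pinval e he
    have h3 := hv.1 e.1 hp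
    have h4 := hv.2 q
    omega
  · by_cases hq : q ∈ S.pins
    · obtain ⟨e, he, rfl⟩ : ∃ e ∈ S.M, e.1 = q := by
        simpa [St.pins] using hq
      have h1 := hI.raised e he p hpq.symm
      have h2 := hI.pinval e he
      have h3 := hv.1 e.1 hq
      have h4 := hv.2 p
      omega
    · have h5 := hA p q
      simp only [Active, hpq, hp, hq, not_false_iff, true_and] at h5
      have h6 := hv.2 p
      have h7 := hv.2 q
      omega

lemma pins_nodup (S : St n) (hI : Inv G k S) : S.pins.Nodup := by
  exact hI.pair.map _ (fun a b h => h.2.2.1)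

/-- The leaf case of the construction. -/
lemma leaf_case (S : St n) (hI : Inv G k S) (hA : ¬ ∃ p q, Active G k S p q) :
    ∃ L : List ((Fin n →₀ ℕ) × Finset (Fin n)),
      L.Pairwise (fun P Q => Disjoint (stanleyPiece P.1 P.2) (stanleyPiece Q.1 Q.2)) ∧
      (∀ P ∈ L, stanleyPiece P.1 P.2 ⊆ Region S) ∧
      (⋃ P ∈ L, stanleyPiece P.1 P.2) = Apts G k ∩ Region S ∧
      (∀ P ∈ L, n - orderedMatchingNum G ≤ P.2.card) := by
  classical
  refine ⟨[(Finsupp.equivFunOnFinite.symm S.ell, S.pins.toFinsetᶜ)], List.pairwise_singleton _ _,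
    ?_, ?_, ?_⟩
  · intro P hP
    simp only [List.mem_singleton] at hP
    subst hP
    intro v hv
    obtain ⟨h1, h2⟩ := hv
    constructor
    · intro a ha
      have := h2 a (by simp [ha])
      simpa using this
    · intro z
      have := Finsupp.le_def.1 h1 z
      simpa using this
  · have hreg : stanleyPiece (Finsupp.equivFunOnFinite.symm S.ell) S.pins.toFinsetᶜ
        = Region S := by
      ext v
      constructor
      · rintro ⟨h1, h2⟩
        refine ⟨fun a ha => by simpa using h2 a (by simp [ha]), fun z => by
          simpa using Finsupp.le_def.1 h1 z⟩
      · rintro ⟨h1, h2⟩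
        refine ⟨Finsupp.le_def.2 fun z => by simpa using h2 z, fun i hi => ?_⟩
        simp only [Finset.notMem_compl, List.mem_toFinset] at hi
        simpa using h1 i hi
    simp only [List.mem_singleton, Set.iUnion_iUnion_eq_left, hreg]
    exact (Set.inter_eq_self_of_subset_right (region_subset_apts G k S hI hA)).symm
  · intro P hP
    simp only [List.mem_singleton] at hP
    subst hP
    simp only [Finset.card_compl, Fintype.card_fin]
    have h1 : S.pins.toFinset.card = S.M.length := by
      rw [List.toFinset_card_of_nodup (pins_nodup G k S hI)]
      simp [St.pins]
    rw [h1]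
    exact Nat.sub_le_sub_left (length_le_nu G k S hI) n

/-- Main recursive construction: every invariant state admits a suitable partition. -/
lemma exists_partition : ∀ (N : ℕ) (S : St n), Inv G k S → msr k S ≤ N →
    ∃ L : List ((Fin n →₀ ℕ) × Finset (Fin n)),
      L.Pairwise (fun P Q => Disjoint (stanleyPiece P.1 P.2) (stanleyPiece Q.1 Q.2)) ∧
      (∀ P ∈ L, stanleyPiece P.1 P.2 ⊆ Region S) ∧
      (⋃ P ∈ L, stanleyPiece P.1 P.2) = Apts G k ∩ Region S ∧
      (∀ P ∈ L, n - orderedMatchingNum G ≤ P.2.card) := by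
  intro N
  induction N with
  | zero =>
    intro S hI hm
    apply leaf_case G k S hI
    rintro ⟨p, q, hpq⟩
    have h0 : msr k S = 0 := Nat.le_zero.1 hm
    have h1 : ∀ z : Fin n, k - min (S.ell z) k = 0 := by
      intro z
      exact (Finset.sum_eq_zero_iff.1 h0) z (Finset.mem_univ z)
    have h2 := h1 p
    have h3 := h1 q
    have h4 := hpq.2.2.2
    omega
  | succ N ih =>
    intro S hI hm
    classical
    by_cases hA : ∃ p q, Active G k S p q
    swap
    · exact leaf_case G k S hI hA
    obtain ⟨p0, q0, hp0⟩ := hA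
    set T : Finset (Fin n) := Finset.univ.filter (fun p => ∃ q, Active G k S p q) with hT
    have hTne : T.Nonempty := by
      refine ⟨p0, ?_⟩
      simp only [hT, Finset.mem_filter, Finset.mem_univ, true_and]
      exact ⟨q0, hp0⟩
    obtain ⟨x, hxT, hxmin⟩ := T.exists_min_image S.ell hTne
    obtain ⟨w, hw⟩ : ∃ q, Active G k S x q := by
      simpa only [hT, Finset.mem_filter, Finset.mem_univ, true_and] using hxT
    obtain ⟨hadj, hxpin, hwpin, hact⟩ := hw
    have hw' : Active G k S x w := ⟨hadj, hxpin, hwpin, hact⟩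
    have hmemT : ∀ p q, Active G k S p q → S.ell x ≤ S.ell p := by
      intro p q h
      apply hxmin p
      simp only [hT, Finset.mem_filter, Finset.mem_univ, true_and]
      exact ⟨q, h⟩
    have hcw : S.ell x ≤ S.ell w :=
      hmemT w x ⟨hadj.symm, hwpin, hxpin, by omega⟩
    have h2c : 2 * S.ell x < k := by omega
    have hck : S.ell x < k := by omega
    have hpin_nonadj : ∀ e ∈ S.M, ¬ G.Adj e.1 x := by
      intro e he hAdj
      have h1 := hI.raised e he x hAdj
      have h2 := hI.minpin e he x w hw'
      omega
    have hpartner_nonadj : ∀ e ∈ S.M, ¬ G.Adj e.1 w := by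
      intro e he hAdj
      have h1 := hI.raised e he w hAdj
      have h2 := hI.minpin e he x w hw'
      omega
    set S1 : St n := ⟨Function.update S.ell x (S.ell x + 1), S.M⟩ with hS1
    set S2 : St n := ⟨fun z => if G.Adj x z then max (S.ell z) (k - S.ell x) else S.ell z,
      (x, w, S.ell x) :: S.M⟩ with hS2
    have hpins2 : S2.pins = x :: S.pins := rfl
    have hell1 : ∀ z, S.ell z ≤ S1.ell z := by
      intro z
      simp only [hS1, Function.update_apply]
      by_cases h : z = x
      · subst h; simp
      · simp [h]
    have hell1x : S1.ell x = S.ell x + 1 := by simp [hS1]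
    have hell1ne : ∀ z, z ≠ x → S1.ell z = S.ell z := by
      intro z hz; simp [hS1, Function.update_apply, hz]
    have hell2 : ∀ z, S.ell z ≤ S2.ell z := by
      intro z
      simp only [hS2]
      split
      · exact le_max_left _ _
      · exact le_rfl
    have hell2x : S2.ell x = S.ell x := by simp [hS2, G.irrefl]
    have hell2nadj : ∀ z, ¬ G.Adj x z → S2.ell z = S.ell z := by
      intro z hz; simp [hS2, hz]
    have hell2adj : ∀ z, G.Adj x z → S2.ell z = max (S.ell z) (k - S.ell x) := by
      intro z hz; simp [hS2, hz]
    have hell2old : ∀ e ∈ S.M, S2.ell e.1 = S.ell e.1 := by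
      intro e he
      exact hell2nadj _ (fun h => hpin_nonadj e he h.symm)
    have hnbr : ∀ z, G.Adj x z → k ≤ S.ell x + S2.ell z := by
      intro z hz
      rw [hell2adj z hz]
      have h5 := le_max_right (S.ell z) (k - S.ell x)
      omega
    have hact21 : ∀ p q, Active G k S2 p q → Active G k S p q := by
      rintro p q ⟨h1, h2, h3, h4⟩
      rw [hpins2] at h2 h3
      refine ⟨h1, fun h => h2 (List.mem_cons_of_mem _ h),
        fun h => h3 (List.mem_cons_of_mem _ h), ?_⟩
      have h5 := hell2 p
      have h6 := hell2 q
      omega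
    have hact11 : ∀ p q, Active G k S1 p q → Active G k S p q := by
      rintro p q ⟨h1, h2, h3, h4⟩
      refine ⟨h1, h2, h3, ?_⟩
      have h5 := hell1 p
      have h6 := hell1 q
      omega
    have hI1 : Inv G k S1 := by
      refine ⟨hI.adj, ?_, hI.small, ?_, ?_, hI.partnerFree, hI.pair⟩
      · intro e he
        rw [hell1ne e.1 (fun h => hxpin (by rw [← h]; exact List.mem_map_of_mem he))]
        exact hI.pinval e he
      · intro e he q hq
        have h5 := hI.raised e he q hq
        have h6 := hell1 q
        omega
      · intro e he p q h
        have h5 := hI.minpin e he p q (hact11 p q h)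
        have h6 := hell1 p
        omega
    have hI2 : Inv G k S2 := by
      constructor
      · intro e he
        rcases List.mem_cons.1 he with rfl | he'
        · exact hadj
        · exact hI.adj e he'
      · intro e he
        rcases List.mem_cons.1 he with rfl | he'
        · exact hell2x
        · rw [hell2old e he']; exact hI.pinval e he'
      · intro e he
        rcases List.mem_cons.1 he with rfl | he'
        · exact h2c
        · exact hI.small e he'
      · intro e he q hq
        rcases List.mem_cons.1 he with rfl | he'
        · exact hnbr q hq
        · have h5 := hI.raised e he' q hq
          have h6 := hell2 q
          omega
      · intro e he p q h
        have hS := hact21 p q h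
        rcases List.mem_cons.1 he with rfl | he'
        · have h5 := hmemT p q hS
          have h6 := hell2 p
          show S.ell x ≤ S2.ell p
          omega
        · have h5 := hI.minpin e he' p q hS
          have h6 := hell2 p
          omega
      · intro e he
        rcases List.mem_cons.1 he with rfl | he'
        · rw [hpins2]
          intro hmem
          rcases List.mem_cons.1 hmem with h | h
          · exact hadj.ne' h
          · exact hwpin h
        · rw [hpins2]
          intro hmem
          rcases List.mem_cons.1 hmem with h | h
          · exact hpin_nonadj e he' (by rw [← h]; exact hI.adj e he')
          · exact hI.partnerFree e he' h
      · refine List.Pairwise.cons ?_ hI.pair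
        intro f hf
        refine ⟨fun h => hpin_nonadj f hf h.symm, hpartner_nonadj f hf, ?_, ?_, ?_, ?_⟩
        · intro h
          have h' : x = f.1 := h
          exact hxpin (by rw [h']; exact List.mem_map_of_mem hf)
        · intro h
          have h' : x = f.2.1 := h
          have h2 := hI.adj f hf
          rw [← h'] at h2
          exact hpin_nonadj f hf h2
        · intro h
          have h' : w = f.1 := h
          exact hwpin (by rw [h']; exact List.mem_map_of_mem hf)
        · intro h
          have h' : w = f.2.1 := h
          have h2 := hI.adj f hf
          rw [← h'] at h2
          exact hpartner_nonadj f hf h2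
    have hmsr1 : msr k S1 < msr k S := by
      apply Finset.sum_lt_sum
      · intro i _
        exact Nat.sub_le_sub_left (min_le_min (hell1 i) le_rfl) k
      · refine ⟨x, Finset.mem_univ x, ?_⟩
        rw [hell1x]
        have h1 : min (S.ell x) k = S.ell x := min_eq_left hck.le
        have h2 : min (S.ell x + 1) k = S.ell x + 1 := min_eq_left hck
        omega
    have hmsr2 : msr k S2 < msr k S := by
      apply Finset.sum_lt_sum
      · intro i _
        exact Nat.sub_le_sub_left (min_le_min (hell2 i) le_rfl) k
      · refine ⟨w, Finset.mem_univ w, ?_⟩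
        have h1 : min (S.ell w) k = S.ell w := min_eq_left (by omega)
        have h2 : k - S.ell x ≤ min (S2.ell w) k := by
          refine le_min ?_ (Nat.sub_le _ _)
          rw [hell2adj w hadj]
          exact le_max_right _ _
        omega
    have hR1sub : Region S1 ⊆ Region S := by
      rintro v ⟨h1, h2⟩
      refine ⟨fun a ha => ?_, fun z => le_trans (hell1 z) (h2 z)⟩
      rw [h1 a ha]
      exact hell1ne a (fun h => hxpin (h ▸ ha))
    have hR1eq : Region S1 = {v ∈ Region S | S.ell x + 1 ≤ v x} := by
      ext v
      constructor
      · intro hv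
        refine ⟨hR1sub hv, ?_⟩
        have h5 := hv.2 x
        rwa [hell1x] at h5
      · rintro ⟨⟨h1, h2⟩, h3⟩
        refine ⟨fun a ha => ?_, fun z => ?_⟩
        · rw [hell1ne a (fun h => hxpin (h ▸ ha))]
          exact h1 a ha
        · by_cases hz : z = x
          · subst hz; rw [hell1x]; exact h3
          · rw [hell1ne z hz]; exact h2 z
    have hR2sub : Region S2 ⊆ {v ∈ Region S | v x = S.ell x} := by
      rintro v ⟨h1, h2⟩
      have hvx : v x = S.ell x := by
        have h5 := h1 x (by rw [hpins2]; exact List.mem_cons_self)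
        rwa [hell2x] at h5
      refine ⟨⟨fun a ha => ?_, fun z => le_trans (hell2 z) (h2 z)⟩, hvx⟩
      have h5 := h1 a (by rw [hpins2]; exact List.mem_cons_of_mem _ ha)
      rw [h5]
      obtain ⟨e, he, rfl⟩ : ∃ e ∈ S.M, e.1 = a := by simpa [St.pins] using ha
      exact hell2old e he
    have hR2eq : Apts G k ∩ Region S2 = Apts G k ∩ {v ∈ Region S | v x = S.ell x} := by
      apply Set.Subset.antisymm
      · exact Set.inter_subset_inter_right _ hR2sub
      · rintro v ⟨hva, ⟨⟨h1, h2⟩, h3⟩⟩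
        refine ⟨hva, fun a ha => ?_, fun z => ?_⟩
        · rw [hpins2] at ha
          rcases List.mem_cons.1 ha with rfl | ha'
          · rw [hell2x]; exact h3
          · rw [h1 a ha']
            obtain ⟨e, he, rfl⟩ : ∃ e ∈ S.M, e.1 = a := by simpa [St.pins] using ha'
            exact (hell2old e he).symm
        · by_cases hz : G.Adj x z
          · rw [hell2adj z hz]
            have h4 := hva x z hz
            have h5 := h2 z
            exact max_le h5 (by omega)
          · rw [hell2nadj z hz]; exact h2 z
    have hsplit : Apts G k ∩ Region S =
        (Apts G k ∩ Region S2) ∪ (Apts G k ∩ Region S1) := by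
      rw [hR2eq, hR1eq]
      ext v
      constructor
      · rintro ⟨hva, hvr⟩
        have h5 := hvr.2 x
        rcases eq_or_lt_of_le h5 with h | h
        · exact Or.inl ⟨hva, hvr, h.symm⟩
        · exact Or.inr ⟨hva, hvr, h⟩
      · rintro (⟨hva, hvr, -⟩ | ⟨hva, hvr, -⟩) <;> exact ⟨hva, hvr⟩
    obtain ⟨L1, hpw1, hsub1, hcov1, hcard1⟩ := ih S1 hI1 (by omega)
    obtain ⟨L2, hpw2, hsub2, hcov2, hcard2⟩ := ih S2 hI2 (by omega)
    have hdisjR : Disjoint (Region S2) (Region S1) := by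
      rw [Set.disjoint_left]
      intro v hv2 hv1
      have h1 := (hR2sub hv2).2
      have h2 : S.ell x + 1 ≤ v x := by
        have h5 := hv1.2 x
        rwa [hell1x] at h5
      omega
    refine ⟨L2 ++ L1, ?_, ?_, ?_, ?_⟩
    · rw [List.pairwise_append]
      refine ⟨hpw2, hpw1, ?_⟩
      intro P hP Q hQ
      exact Set.disjoint_of_subset (hsub2 P hP) (hsub1 Q hQ) hdisjR
    · intro P hP
      rcases List.mem_append.1 hP with h | h
      · exact (hsub2 P h).trans (fun v hv => (hR2sub hv).1)
      · exact (hsub1 P h).trans hR1sub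
    · have hUsplit : (⋃ P ∈ L2 ++ L1, stanleyPiece P.1 P.2)
          = (⋃ P ∈ L2, stanleyPiece P.1 P.2) ∪ (⋃ P ∈ L1, stanleyPiece P.1 P.2) := by
        ext v
        simp only [Set.mem_iUnion, Set.mem_union, List.mem_append, exists_prop]
        constructor
        · rintro ⟨P, hP | hP, hv⟩
          · exact Or.inl ⟨P, hP, hv⟩
          · exact Or.inr ⟨P, hP, hv⟩
        · rintro (⟨P, hP, hv⟩ | ⟨P, hP, hv⟩)
          · exact ⟨P, Or.inl hP, hv⟩
          · exact ⟨P, Or.inr hP, hv⟩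
      rw [hUsplit, hcov2, hcov1, ← hsplit]
    · intro P hP
      rcases List.mem_append.1 hP with h | h
      · exact hcard2 P h
      · exact hcard1 P h

/-- The Stanley depth bound for the set of `k`-covers. -/
lemma sdepth_ge : ((n - orderedMatchingNum G : ℕ) : ℕ∞) ≤ sdepthSet (Apts G k) := by
  classical
  have hI0 : Inv G k ⟨fun _ => 0, []⟩ := by
    constructor <;> simp [St.pins]
  obtain ⟨L, hpw, hsub, hcov, hcard⟩ :=
    exists_partition G k (msr k ⟨fun _ => 0, []⟩) ⟨fun _ => 0, []⟩ hI0 le_rfl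
  have hreg : Region (⟨fun _ => 0, []⟩ : St n) = Set.univ := by
    ext v
    simp [Region, St.pins]
  rw [hreg, Set.inter_univ] at hcov
  have hpwg := (List.pairwise_iff_get).1 hpw
  let D : StanleyDecomp (Apts G k) :=
    { m := L.length
      u := fun i => (L.get i).1
      Z := fun i => (L.get i).2
      cover := by
        rw [← hcov]
        ext v
        simp only [Set.mem_iUnion, exists_prop]
        constructor
        · rintro ⟨P, hP, hv⟩
          obtain ⟨i, hi⟩ := List.mem_iff_get.1 hP
          exact ⟨i, by rw [hi]; exact hv⟩
        · rintro ⟨i, hv⟩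
          exact ⟨L.get i, L.get_mem i, hv⟩
      disj := by
        intro i j hij
        rcases lt_or_gt_of_ne hij with h | h
        · exact hpwg i j h
        · exact (hpwg j i h).symm }
  refine le_trans ?_ (le_iSup (fun D : StanleyDecomp (Apts G k) => ⨅ i, ((D.Z i).card : ℕ∞)) D)
  refine le_iInf ?_
  intro i
  exact_mod_cast hcard (L.get i) (L.get_mem i)



lemma monomial_mem_pow_span {σ : Type*} {K : Type*} [Field K] {p q : σ} (hpq : p ≠ q)
    (k : ℕ) (v : σ →₀ ℕ) :
    (monomial v (1:K) ∈ (Ideal.span {X p, X q})^k) ↔ k ≤ v p + v q := by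
  classical
  constructor
  · intro hm
    by_contra hlt
    push_neg at hlt
    set g : σ → Polynomial K := fun i => if i = p ∨ i = q then Polynomial.X else 1 with hg
    have hmono : (aeval g) (monomial v (1:K)) = Polynomial.X ^ (v p + v q) := by
      rw [aeval_monomial, map_one, one_mul, Finsupp.prod]
      have h1 : ∀ i ∈ v.support, g i ^ v i
          = if i = p ∨ i = q then (Polynomial.X : Polynomial K) ^ v i else 1 := by
        intro i _
        by_cases h : i = p ∨ i = q <;> simp [hg, h]
      rw [Finset.prod_congr rfl h1, ← Finset.prod_filter, Finset.prod_pow_eq_pow_sum]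
      congr 1
      have hsub : v.support.filter (fun i => i = p ∨ i = q) ⊆ ({p, q} : Finset σ) := by
        intro i hi
        simp only [Finset.mem_filter] at hi
        rcases hi.2 with h | h <;> simp [h]
      rw [Finset.sum_subset hsub, Finset.sum_pair hpq]
      intro i hi hni
      simp only [Finset.mem_insert, Finset.mem_singleton] at hi
      by_contra hvi
      exact hni (Finset.mem_filter.mpr ⟨Finsupp.mem_support_iff.mpr hvi, hi⟩)
    have hsp : Ideal.map (aeval g : MvPolynomial σ K →ₐ[K] Polynomial K) (Ideal.span {X p, X q})
        ≤ Ideal.span {(Polynomial.X : Polynomial K)} := by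
      rw [Ideal.map_span]
      apply Ideal.span_le.2
      rintro _ ⟨x, hx, rfl⟩
      simp only [Set.mem_insert_iff, Set.mem_singleton_iff] at hx
      rcases hx with rfl | rfl <;>
        · simp only [aeval_X, hg]
          simp only [true_or, or_true, if_pos]
          exact Ideal.mem_span_singleton_self _
    have hmem : Polynomial.X ^ (v p + v q) ∈ (Ideal.span {(Polynomial.X:Polynomial K)})^k := by
      have h3 := Ideal.mem_map_of_mem (aeval g : MvPolynomial σ K →ₐ[K] Polynomial K) hm
      rw [Ideal.map_pow] at h3
      rw [← hmono]
      exact (Ideal.pow_right_mono hsp k) h3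
    rw [Ideal.span_singleton_pow, Ideal.mem_span_singleton] at hmem
    rw [Polynomial.X_pow_dvd_iff] at hmem
    have h4 := hmem (v p + v q) hlt
    simp [Polynomial.coeff_X_pow] at h4
  · intro h
    set a := min (v p) k with ha
    set b := k - a with hb
    have hab : a + b = k := by
      have := min_le_right (v p) k; omega
    have hav : a ≤ v p := min_le_left _ _
    have hbv : b ≤ v q := by
      rcases le_total (v p) k with h1 | h1
      · have : a = v p := min_eq_left h1
        omega
      · have : a = k := min_eq_right h1
        omega
    set w : σ →₀ ℕ := v - (Finsupp.single p a + Finsupp.single q b) with hw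
    have hvw : v = w + (Finsupp.single p a + Finsupp.single q b) := by
      ext i
      rw [Finsupp.add_apply, hw, Finsupp.tsub_apply, Finsupp.add_apply]
      rcases eq_or_ne i p with rfl | hip
      · rw [Finsupp.single_eq_same, Finsupp.single_eq_of_ne' (Ne.symm hpq)]
        omega
      · rcases eq_or_ne i q with rfl | hiq
        · rw [Finsupp.single_eq_of_ne' (Ne.symm hip), Finsupp.single_eq_same]
          omega
        · rw [Finsupp.single_eq_of_ne' (Ne.symm hip), Finsupp.single_eq_of_ne' (Ne.symm hiq)]
          omega
    have key : monomial v (1:K) = monomial w 1 * (X p ^ a * X q ^ b) := by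
      rw [X_pow_eq_monomial, X_pow_eq_monomial, monomial_mul, monomial_mul, one_mul, one_mul,
        ← hvw]
    rw [key]
    apply Ideal.mul_mem_left
    have hsplit : (Ideal.span {X p, X q} : Ideal (MvPolynomial σ K))^k
        = (Ideal.span {X p, X q})^a * (Ideal.span {X p, X q})^b := by
      rw [← pow_add, hab]
    rw [hsplit]
    exact Ideal.mul_mem_mul
      (Ideal.pow_mem_pow (Ideal.subset_span (by simp)) a)
      (Ideal.pow_mem_pow (Ideal.subset_span (by simp)) b)


end SPA


/-- For a finite simple graph `G` on `n` vertices and every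
integer `k ≥ 1`, `sdepth(J(G)^(k)) ≥ n − ν_o(G)`, where `ν_o(G)` is the ordered
matching number of `G`. -/
theorem sdepth_ideal_symbPow_lower_bound (K : Type*) [Field K] (n : ℕ)
    (G : SimpleGraph (Fin n)) (k : ℕ) (hk : 1 ≤ k) :
    ((n - orderedMatchingNum G : ℕ) : ℕ∞) ≤ sdepthIdeal (coverIdealSymbPow K G k) := by
  have heq : monomialSet (coverIdealSymbPow K G k) = SPA.Apts G k := by
    ext v
    simp only [monomialSet, coverIdealSymbPow, Set.mem_setOf_eq, Ideal.mem_iInf, SPA.Apts]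
    constructor
    · intro h p q hpq
      exact (SPA.monomial_mem_pow_span (G.ne_of_adj hpq) k v).1 (h ⟨(p, q), hpq⟩)
    · intro h e
      exact (SPA.monomial_mem_pow_span (G.ne_of_adj e.prop) k v).2 (h _ _ e.prop)
  show ((n - orderedMatchingNum G : ℕ) : ℕ∞) ≤ sdepthSet (monomialSet (coverIdealSymbPow K G k))
  rw [heq]
  exact SPA.sdepth_ge G k
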